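/- Let P : Set ℕ → Prop be any property of subsets of ℕ (viewed as a property of first-order theories, identifying a theory with the set of Gödel codes of its sentences), and let C := {n : ℕ | P (W_n)}. Suppose F : ℕ →. ℕ is a partial computable function such that C ⊆ dom(F) and for every n ∈ C, F(n) ∉ W_n. Then the set of values of F does not have property P, i.e. ¬ P ({m : ℕ | ∃ n, m ∈ F n}). -/

import Mathlib

/-- `W e` is the domain of the `e`-th partial computable function: the `e`-th
computably enumerable set. -/
def W (e : ℕ) : Set ℕ := {x : ℕ | ((Denumerable.ofNat Nat.Partrec.Code e).eval x).Dom}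

/-- If `P` is any property of c.e. sets (theories identified with sets of Gödel codes),
`C = {n | P (W n)}`, and `F` is a partial computable function defined on all of `C`
with `F n ∉ W n` for every `n ∈ C`, then the set of values of `F` does not have
property `P`. -/
theorem stmt_0 (P : Set ℕ → Prop) (C : Set ℕ) (hC : C = {n : ℕ | P (W n)})
    (F : ℕ →. ℕ) (hF : Partrec F)
    (hdom : C ⊆ {n : ℕ | (F n).Dom})
    (hdiag : ∀ n ∈ C, ∀ m ∈ F n, m ∉ W n) :
    ¬ P {m : ℕ | ∃ n, m ∈ F n} := by
  intro hP
  -- code for F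
  obtain ⟨c, hc⟩ := Nat.Partrec.Code.exists_code.1 (Partrec.nat_iff.1 hF)
  -- H m is defined iff m is in the range of F
  set g : ℕ → ℕ → Option ℕ := fun m k =>
    if Nat.Partrec.Code.evaln k.unpair.1 c k.unpair.2 = some m then some 0 else none with hg
  have hgpr : Primrec fun p : ℕ × ℕ =>
      if Nat.Partrec.Code.evaln p.2.unpair.1 c p.2.unpair.2 = some p.1 then
        (some 0 : Option ℕ) else none := by
    apply Primrec.ite _ (Primrec.const _) (Primrec.const _)
    exact Primrec.eq.comp
      (Nat.Partrec.Code.primrec_evaln.comp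
        (((Primrec.fst.comp (Primrec.unpair.comp Primrec.snd)).pair (Primrec.const c)).pair
          (Primrec.snd.comp (Primrec.unpair.comp Primrec.snd))))
      (Primrec.option_some.comp Primrec.fst)
  set H : ℕ →. ℕ := fun m => Nat.rfindOpt (g m) with hH
  have hHpr : Partrec H := Partrec.rfindOpt hgpr.to_comp.to₂
  have hdomH : ∀ m, (H m).Dom ↔ ∃ n, m ∈ F n := by
    intro m
    rw [hH]
    simp only [Nat.rfindOpt_dom]
    constructor
    · rintro ⟨k, a, hk⟩
      rw [hg] at hk
      simp only [Option.mem_def] at hk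
      split_ifs at hk with h
      · exact ⟨k.unpair.2, by rw [← hc]; exact Nat.Partrec.Code.evaln_sound h⟩
    · rintro ⟨n, hn⟩
      rw [← hc] at hn
      obtain ⟨k, hk⟩ := Nat.Partrec.Code.evaln_complete.1 hn
      refine ⟨Nat.pair k n, 0, ?_⟩
      rw [hg]
      simpa [Nat.unpair_pair] using hk
  -- get a code for H
  obtain ⟨c', hc'⟩ := Nat.Partrec.Code.exists_code.1 (Partrec.nat_iff.1 hHpr)
  set e := Encodable.encode c' with he
  have hWe : W e = {m : ℕ | ∃ n, m ∈ F n} := by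
    ext m
    have : (Denumerable.ofNat Nat.Partrec.Code e) = c' := by
      simp [he]
    simp only [W, Set.mem_setOf_eq, this, hc']
    exact hdomH m
  have heC : e ∈ C := by rw [hC]; exact Set.mem_setOf_eq ▸ (hWe ▸ hP)
  have hd : (F e).Dom := hdom heC
  obtain ⟨m, hm⟩ := Part.dom_iff_mem.1 hd
  exact hdiag e heC m hm (hWe ▸ ⟨e, hm⟩)
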